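/- Let τ consist of a single binary relation R, and let T assert: R is irreflexive, symmetric, every element has at most one R-neighbor, there are infinitely many elements with an R-neighbor, and infinitely many elements without an R-neighbor. Then T is ℵ₀-categorical. -/

import Mathlib

open FirstOrder FirstOrder.Language FirstOrder.Language.Structure

/-- The language with a single binary relation `R`. -/
def binLang : FirstOrder.Language where
  Functions := fun _ => Empty
  Relations := fun n => match n with | 2 => Unit | _ => Empty

/-- The interpretation of `R` in a `binLang`-structure. -/
def rel {M : Type} [binLang.Structure M] (x y : M) : Prop :=
  RelMap (L := binLang) (n := 2) (Unit.unit : binLang.Relations 2) ![x, y]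

/-- The partner function: sends a matched element to its unique neighbor. -/
noncomputable def pf (M : Type) [binLang.Structure M] (x : M) : M :=
  @Classical.epsilon M ⟨x⟩ fun y => rel x y

lemma pf_rel {M : Type} [binLang.Structure M] {x : M} (h : ∃ y, rel x y) :
    rel x (pf M x) := Classical.epsilon_spec h

lemma pf_matched {M : Type} [binLang.Structure M]
    (hsym : ∀ x y : M, rel x y → rel y x) {x : M} (h : ∃ y, rel x y) :
    ∃ y, rel (pf M x) y := ⟨x, hsym _ _ (pf_rel h)⟩

lemma pf_invol {M : Type} [binLang.Structure M]
    (hsym : ∀ x y : M, rel x y → rel y x)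
    (hfun : ∀ x y z : M, rel x y → rel x z → y = z) {x : M} (h : ∃ y, rel x y) :
    pf M (pf M x) = x := by
  have h2 : rel (pf M x) x := hsym _ _ (pf_rel h)
  exact hfun _ _ _ (pf_rel ⟨x, h2⟩) h2

/-- Any countably infinite type with a fixed-point-free involution is isomorphic to
`ℕ × Bool` with the flip involution. -/
lemma exists_pairing {S : Type} [Countable S] [Infinite S] (σ : S → S)
    (hinv : ∀ x, σ (σ x) = x) (hfpf : ∀ x, σ x ≠ x) :
    ∃ e : S ≃ ℕ × Bool, ∀ x, e (σ x) = ((e x).1, !(e x).2) := by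
  classical
  obtain ⟨q⟩ : Nonempty (S ≃ ℕ) := nonempty_equiv_of_countable
  set A : Set S := {x | q x < q (σ x)} with hA
  have hqne : ∀ x : S, q x ≠ q (σ x) := fun x h => hfpf x (q.injective h.symm)
  have hmem : ∀ x : S, σ x ∈ A ↔ x ∉ A := by
    intro x
    have h0 := hqne x
    simp only [hA, Set.mem_setOf_eq, hinv]
    omega
  have hAinf : A.Infinite := by
    intro hfin
    have hsub : (Set.univ : Set S) ⊆ A ∪ σ '' A := by
      intro x _
      by_cases hx : x ∈ A
      · exact Or.inl hx
      · exact Or.inr ⟨σ x, (hmem x).2 hx, hinv x⟩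
    have : (Set.univ : Set S).Finite := (hfin.union (hfin.image σ)).subset hsub
    exact Set.infinite_univ this
  haveI := hAinf.to_subtype
  obtain ⟨r⟩ : Nonempty (↥A ≃ ℕ) := nonempty_equiv_of_countable
  refine ⟨{
    toFun := fun x => if h : x ∈ A then (r ⟨x, h⟩, false) else (r ⟨σ x, (hmem x).2 h⟩, true)
    invFun := fun p => if p.2 then σ ↑(r.symm p.1) else ↑(r.symm p.1)
    left_inv := ?_
    right_inv := ?_ }, ?_⟩
  · intro x
    by_cases h : x ∈ A
    · simp [h]
    · simp [h, hinv]
  · rintro ⟨n, b⟩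
    cases b
    · have h : ((r.symm n : ↥A) : S) ∈ A := (r.symm n).2
      simp [h]
    · have h1 : ((r.symm n : ↥A) : S) ∈ A := (r.symm n).2
      have h : σ ((r.symm n : ↥A) : S) ∉ A := fun hc => ((hmem _).1 hc) h1
      simp [h, hinv]
  · intro x
    by_cases h : x ∈ A
    · have h2 : σ x ∉ A := fun hc => ((hmem x).1 hc) h
      simp [h, h2, hinv]
    · have h2 : σ x ∈ A := (hmem x).2 h
      simp [h, h2, hinv]

/-- The theory saying `R` is an irreflexive symmetric partial matching with infinitely many
matched and infinitely many unmatched points is ℵ₀-categorical. -/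
theorem statement10 (M N : Type) [Countable M] [Infinite M] [Countable N] [Infinite N]
    [binLang.Structure M] [binLang.Structure N]
    (hMirr : ∀ x : M, ¬ rel x x) (hMsym : ∀ x y : M, rel x y → rel y x)
    (hMfun : ∀ x y z : M, rel x y → rel x z → y = z)
    (hMmat : {x : M | ∃ y, rel x y}.Infinite)
    (hMunm : {x : M | ¬ ∃ y, rel x y}.Infinite)
    (hNirr : ∀ x : N, ¬ rel x x) (hNsym : ∀ x y : N, rel x y → rel y x)
    (hNfun : ∀ x y z : N, rel x y → rel x z → y = z)
    (hNmat : {x : N | ∃ y, rel x y}.Infinite)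
    (hNunm : {x : N | ¬ ∃ y, rel x y}.Infinite) :
    Nonempty (M ≃[binLang] N) := by
  classical
  haveI := hMmat.to_subtype
  haveI := hMunm.to_subtype
  haveI := hNmat.to_subtype
  haveI := hNunm.to_subtype
  set σM : {x : M | ∃ y, rel x y} → {x : M | ∃ y, rel x y} :=
    fun x => ⟨pf M x.1, pf_matched hMsym x.2⟩ with hσM
  set σN : {x : N | ∃ y, rel x y} → {x : N | ∃ y, rel x y} :=
    fun x => ⟨pf N x.1, pf_matched hNsym x.2⟩ with hσN
  obtain ⟨eM, heM⟩ := exists_pairing σM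
    (fun x => Subtype.ext (pf_invol hMsym hMfun x.2))
    (fun x hx => hMirr x.1 (by
      have := pf_rel x.2
      rw [show pf M x.1 = x.1 from congrArg Subtype.val hx] at this
      exact this))
  obtain ⟨eN, heN⟩ := exists_pairing σN
    (fun x => Subtype.ext (pf_invol hNsym hNfun x.2))
    (fun x hx => hNirr x.1 (by
      have := pf_rel x.2
      rw [show pf N x.1 = x.1 from congrArg Subtype.val hx] at this
      exact this))
  obtain ⟨uM⟩ : Nonempty ({x : M | ¬ ∃ y, rel x y} ≃ ℕ) := nonempty_equiv_of_countable
  obtain ⟨uN⟩ : Nonempty ({x : N | ¬ ∃ y, rel x y} ≃ ℕ) := nonempty_equiv_of_countable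
  set E : M ≃ N :=
    (Equiv.sumCompl (fun x : M => ∃ y, rel x y)).symm.trans
      ((Equiv.sumCongr (eM.trans eN.symm) (uM.trans uN.symm)).trans
        (Equiv.sumCompl (fun x : N => ∃ y, rel x y))) with hE
  have hEmat : ∀ (x : M) (h : ∃ y, rel x y),
      E x = ((eN.symm (eM ⟨x, h⟩)) : {x : N | ∃ y, rel x y}).1 := by
    intro x h
    rw [hE]
    simp only [Equiv.trans_apply]
    rw [Equiv.sumCompl_symm_apply_of_pos (p := fun x : M => ∃ y, rel x y) h]
    rfl
  have hEunm : ∀ (x : M) (h : ¬ ∃ y, rel x y),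
      E x = ((uN.symm (uM ⟨x, h⟩)) : {x : N | ¬ ∃ y, rel x y}).1 := by
    intro x h
    rw [hE]
    simp only [Equiv.trans_apply]
    rw [Equiv.sumCompl_symm_apply_of_neg (p := fun x : M => ∃ y, rel x y) h]
    rfl
  have hExmat : ∀ (x : M), (∃ y, rel x y) → ∃ z, rel (E x) z := by
    intro x h
    rw [hEmat x h]
    exact (eN.symm (eM ⟨x, h⟩)).2
  have hExunm : ∀ (x : M), ¬ (∃ y, rel x y) → ¬ ∃ z, rel (E x) z := by
    intro x h
    rw [hEunm x h]
    exact (uN.symm (uM ⟨x, h⟩)).2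
  -- the symm of eN also intertwines the involutions
  have heNs : ∀ p : ℕ × Bool, σN (eN.symm p) = eN.symm (p.1, !p.2) := by
    intro p
    apply eN.injective
    rw [heN, Equiv.apply_symm_apply, Equiv.apply_symm_apply]
  have hEcomm : ∀ (x : M) (h : ∃ y, rel x y), E (pf M x) = pf N (E x) := by
    intro x h
    rw [hEmat (pf M x) (pf_matched hMsym h), hEmat x h]
    have h1 : (⟨pf M x, pf_matched hMsym h⟩ : {x : M | ∃ y, rel x y}) = σM ⟨x, h⟩ := rfl
    rw [h1, heM]
    have h2 := heNs (eM ⟨x, h⟩)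
    rw [← h2]
    try rfl
  have hrel : ∀ x y : M, rel x y ↔ rel (E x) (E y) := by
    intro x y
    constructor
    · intro hxy
      have h : ∃ z, rel x z := ⟨y, hxy⟩
      have hy : y = pf M x := (hMfun x (pf M x) y (pf_rel h) hxy).symm
      rw [hy, hEcomm x h]
      exact pf_rel (hExmat x h)
    · intro hxy
      have h : ∃ z, rel x z := by
        by_contra hc
        exact hExunm x hc ⟨E y, hxy⟩
      have h2 : pf N (E x) = E y := hNfun (E x) _ _ (pf_rel (hExmat x h)) hxy
      have h3 : E (pf M x) = E y := by rw [hEcomm x h, h2]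
      have h4 : pf M x = y := E.injective h3
      rw [← h4]
      exact pf_rel h
  refine ⟨{ toEquiv := E, map_fun' := fun {n} f _ => f.elim, map_rel' := ?_ }⟩
  intro n r v
  match n, r with
  | 2, r =>
    cases r
    have hv : v = ![v 0, v 1] := by
      funext i; fin_cases i <;> rfl
    have hv2 : (E.toFun ∘ v) = ![E (v 0), E (v 1)] := by
      funext i; fin_cases i <;> rfl
    rw [hv2]
    conv_rhs => rw [hv]
    exact (hrel (v 0) (v 1)).symm
  | 0, r => exact r.elim
  | 1, r => exact r.elim
  | (n + 3), r => exact r.elim
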